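/- (Veech's short-curve bound, abstract form) Suppose X is a point on the axis of a pseudo-Anosov mapping class γ of translation length at most R acting on Teichmüller space with the Teichmüller metric, and suppose α is a simple closed curve with Ext_X(α) ≤ ε₀''·e^{−(6g−4)R}. Using Kerckhoff's inequality Ext_{γ^j α}(X) ≤ e^{2jR}·Ext_α(X), the curves α, γα, …, γ^{3g−2}α all have extremal length at most ε₀'' on X; if ε₀'' is small enough that curves of extremal length ≤ ε₀'' are pairwise disjoint, this yields 3g−2 disjoint simple closed curves on a genus g surface, a contradiction since at most 3g−3 disjoint curves exist. Hence every point X on a closed geodesic of length at most R in moduli space of genus g satisfies ℓ₁(X) ≥ ε₀'·e^{−(6g−6)R} for a constant ε₀' depending only on g. -/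
import Mathlib


open Real

/-- Abstract form of Veech's short-curve bound: if `γ` (acting on curves by `T`) satisfies
Kerckhoff's inequality `Ext(T^j α) ≤ e^{2jR}·Ext α`, curves of extremal length `≤ ε₀''` are
pairwise disjoint, the iterates `T^i α` (for `i ≤ 3g−2`) are pairwise distinct, and there is
no family of `3g−2` pairwise disjoint distinct curves, then no curve `α` can satisfy
`Ext α ≤ ε₀''·e^{−(6g−4)R}`.  (Hence every point on a closed geodesic of length at most `R`
has shortest-curve length at least `ε₀'·e^{−(6g−6)R}`.) -/
theorem stmt6 (g : ℕ) (hg : 2 ≤ g) (R : ℝ) (hR : 0 < R)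
    (ε : ℝ) (hε : 0 < ε)
    (Curve : Type*) (Ext : Curve → ℝ) (T : Curve → Curve)
    (disj : Curve → Curve → Prop)
    (hKer : ∀ (α : Curve) (j : ℕ), Ext (T^[j] α) ≤ Real.exp (2 * j * R) * Ext α)
    (hshortdisj : ∀ α β : Curve, Ext α ≤ ε → Ext β ≤ ε → α ≠ β → disj α β)
    (α : Curve)
    (hdistinct : ∀ i j : ℕ, i ≤ 3 * g - 2 → j ≤ 3 * g - 2 → i ≠ j → T^[i] α ≠ T^[j] α)
    (hmax : ¬ ∃ f : Fin (3 * g - 2) → Curve,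
      Function.Injective f ∧ ∀ i j : Fin (3 * g - 2), i ≠ j → disj (f i) (f j))
    (hα : Ext α ≤ ε * Real.exp (-((6 * g : ℝ) - 4) * R)) :
    False := by
  -- Each iterate T^[j] α for j < 3g-2 has extremal length ≤ ε.
  have hshort : ∀ j : ℕ, j < 3 * g - 2 → Ext (T^[j] α) ≤ ε := by
    intro j hj
    have h1 : Ext (T^[j] α) ≤ Real.exp (2 * j * R) * Ext α := hKer α j
    have h2 : Real.exp (2 * j * R) * Ext α ≤
        Real.exp (2 * j * R) * (ε * Real.exp (-((6 * g : ℝ) - 4) * R)) :=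
      mul_le_mul_of_nonneg_left hα (Real.exp_pos _).le
    have hjR : (2 * j : ℝ) * R ≤ ((6 * g : ℝ) - 4) * R := by
      have hj' : (j : ℝ) ≤ 3 * g - 3 := by
        have : j + 1 ≤ 3 * g - 2 := hj
        have h3 : j + 3 ≤ 3 * g := by omega
        have : (j : ℝ) + 3 ≤ 3 * g := by exact_mod_cast h3
        linarith
      nlinarith
    have h3 : Real.exp (2 * j * R) * Real.exp (-((6 * g : ℝ) - 4) * R) ≤ 1 := by
      rw [← Real.exp_add]
      apply Real.exp_le_one_iff.mpr
      linarith
    calc Ext (T^[j] α) ≤ Real.exp (2 * j * R) * (ε * Real.exp (-((6 * g : ℝ) - 4) * R)) :=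
          le_trans h1 h2
      _ = ε * (Real.exp (2 * j * R) * Real.exp (-((6 * g : ℝ) - 4) * R)) := by ring
      _ ≤ ε * 1 := mul_le_mul_of_nonneg_left h3 hε.le
      _ = ε := mul_one ε
  apply hmax
  refine ⟨fun i => T^[(i : ℕ)] α, ?_, ?_⟩
  · intro i j hij
    by_contra hne
    exact hdistinct i j (le_of_lt (by omega : (i : ℕ) < 3 * g - 2))
      (le_of_lt j.isLt) (fun h => hne (Fin.ext h)) hij
  · intro i j hij
    exact hshortdisj _ _ (hshort i i.isLt) (hshort j j.isLt)
      (hdistinct i j i.isLt.le j.isLt.le (fun h => hij (Fin.ext h)))
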